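/- Let p be a prime power (p = q^t with q prime, t ≥ 1) and let k be a positive integer dividing p - 1. Then there exists a balanced generalized weighing matrix BGW(p+1, p, p-1) over the cyclic group ℤ_k. -/

import Mathlib

/-- `W` is a balanced generalized weighing matrix `BGW(v, k, lam)` over the cyclic group
`ℤ_n`: each row has exactly `k` entries different from `none`, and for every pair of
distinct rows `i, j` and every `g ∈ ZMod n`, the number of columns `c` with
`W i c = some a`, `W j c = some b` and `a - b = g` equals `lam / n`. -/
def IsBGW (v k lam n : ℕ) (W : Fin v → Fin v → Option (ZMod n)) : Prop :=
  (∀ i, {c : Fin v | W i c ≠ none}.ncard = k) ∧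
  ∀ i j : Fin v, i ≠ j → ∀ g : ZMod n,
    {c : Fin v | ∃ a b : ZMod n, W i c = some a ∧ W j c = some b ∧ a - b = g}.ncard = lam / n

private lemma addFiber {A B : Type*} [AddGroup A] [AddGroup B] [Finite A] [Finite B]
    (f : A →+ B) (hf : Function.Surjective f) (b : B) :
    Nat.card {a : A // f a = b} = Nat.card A / Nat.card B := by
  obtain ⟨a0, ha0⟩ := hf b
  have e : {a : A // f a = b} ≃ f.ker := by
    refine ⟨fun x => ⟨x.1 - a0, ?_⟩, fun x => ⟨x.1 + a0, ?_⟩, fun x => by simp, fun x => by simp⟩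
    · simp [AddMonoidHom.mem_ker, map_sub, x.2, ha0]
    · have := x.2
      simp only [AddMonoidHom.mem_ker] at this
      simp [map_add, this, ha0]
  rw [Nat.card_congr e]
  have h2 : Nat.card (A ⧸ f.ker) = Nat.card B :=
    Nat.card_congr (QuotientAddGroup.quotientKerEquivOfSurjective f hf).toEquiv
  have h3 := AddSubgroup.card_eq_card_quotient_mul_card_addSubgroup f.ker
  have hBpos : 0 < Nat.card B := Nat.card_pos
  rw [h2] at h3
  rw [h3, Nat.mul_div_cancel_left _ hBpos]

private lemma bgw_of_field (p k : ℕ) (F : Type) [Field F] [Fintype F]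
    (hF : Fintype.card F = p) (hk : 1 ≤ k) (hdvd : k ∣ p - 1) :
    ∃ W : Fin (p + 1) → Fin (p + 1) → Option (ZMod k), IsBGW (p + 1) p (p - 1) k W := by
  classical
  have hp2 : 2 ≤ p := hF ▸ Fintype.one_lt_card
  have hn : Nat.card Fˣ = p - 1 := by
    rw [Nat.card_eq_fintype_card, Fintype.card_units, hF]
  haveI : NeZero k := ⟨by omega⟩
  set n := Nat.card Fˣ with hndef
  haveI : NeZero n := ⟨by omega⟩
  have hdvd' : k ∣ n := hn ▸ hdvd
  let ψ : Fˣ ≃* Multiplicative (ZMod n) := (zmodCyclicMulEquiv inferInstance).symm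
  let f : ZMod n →+ ZMod k := (ZMod.castHom hdvd' (ZMod k)).toAddMonoidHom
  have hfsurj : Function.Surjective f := by
    intro g
    exact ⟨((g.val : ℕ) : ZMod n), by
      simp only [f, RingHom.toAddMonoidHom_eq_coe, AddMonoidHom.coe_coe, map_natCast]
      exact ZMod.natCast_rightInverse g⟩
  let χ : Fˣ → ZMod k := fun u => f (ψ u).toAdd
  have hχmul : ∀ u v : Fˣ, χ (u * v) = χ u + χ v := by
    intro u v
    simp only [χ, map_mul, toAdd_mul, map_add]
  have hχ1 : χ 1 = 0 := by simp [χ]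
  have hfib : ∀ g : ZMod k, Nat.card {u : Fˣ // χ u = g} = (p - 1) / k := by
    intro g
    have e : {u : Fˣ // χ u = g} ≃ {m : ZMod n // f m = g} :=
      Equiv.subtypeEquiv (ψ.toEquiv.trans Multiplicative.toAdd) (fun u => Iff.rfl)
    rw [Nat.card_congr e, addFiber f hfsurj g, Nat.card_zmod, Nat.card_zmod, hn]
  -- extend χ to F
  let χ0 : F → ZMod k := fun x => if h : x = 0 then 0 else χ (Units.mk0 x h)
  have hχ0u : ∀ (u : Fˣ), χ0 (u : F) = χ u := by
    intro u
    simp only [χ0, dif_neg u.ne_zero, Units.mk0_val]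
  have hχ0mul : ∀ u v : F, u ≠ 0 → v ≠ 0 → χ0 (u * v) = χ0 u + χ0 v := by
    intro u v hu hv
    simp only [χ0, dif_neg (mul_ne_zero hu hv), dif_neg hu, dif_neg hv, Units.mk0_mul, hχmul]
  have hχ0one : χ0 1 = 0 := by simpa [χ0] using hχ1
  have hfibF : ∀ g : ZMod k, {d : F | d ≠ 0 ∧ χ0 d = g}.ncard = (p - 1) / k := by
    intro g
    rw [← Nat.card_coe_set_eq, ← hfib g]
    refine Nat.card_congr ⟨fun d => ⟨Units.mk0 d.1 d.2.1, ?_⟩,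
      fun u => ⟨(u.1 : F), u.1.ne_zero, by rw [hχ0u]; exact u.2⟩,
      fun d => by simp, fun u => by simp⟩
    obtain ⟨d, hd0, hdg⟩ := d
    rwa [← hχ0u (Units.mk0 d hd0)]
  have hA : ∀ (x : F) (g : ZMod k), {c : F | c ≠ x ∧ χ0 (x - c) = g}.ncard = (p - 1) / k := by
    intro x g
    have himg : {c : F | c ≠ x ∧ χ0 (x - c) = g}
        = (fun d => x - d) '' {d : F | d ≠ 0 ∧ χ0 d = g} := by
      ext c
      constructor
      · rintro ⟨hcx, hcg⟩
        exact ⟨x - c, ⟨sub_ne_zero.mpr (Ne.symm hcx), hcg⟩, by ring⟩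
      · rintro ⟨d, ⟨hd0, hdg⟩, rfl⟩
        refine ⟨fun h => hd0 (by linear_combination -h), by simpa using hdg⟩
    rw [himg, Set.ncard_image_of_injective _ (fun a b h => by linear_combination -h), hfibF]
  have hMob : ∀ x z : F, x ≠ z → ∀ g : ZMod k,
      {c : F | c ≠ x ∧ c ≠ z ∧ χ0 (x - c) - χ0 (z - c) = g}.ncard
        = {d : F | d ≠ 0 ∧ d ≠ 1 ∧ χ0 d = g}.ncard := by
    intro x z hxz g
    set m : F → F := fun c => (x - c) / (z - c) with hm
    set minv : F → F := fun d => (x - d * z) / (1 - d) with hminv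
    have hzx : z - x ≠ 0 := sub_ne_zero.mpr (Ne.symm hxz)
    have hfwd : ∀ c : F, c ≠ x → c ≠ z → m c ≠ 0 ∧ m c ≠ 1 ∧ minv (m c) = c := by
      intro c hcx hcz
      have h1 : x - c ≠ 0 := sub_ne_zero.mpr (Ne.symm hcx)
      have h2 : z - c ≠ 0 := sub_ne_zero.mpr (Ne.symm hcz)
      have hm0 : m c ≠ 0 := div_ne_zero h1 h2
      have hm1 : m c ≠ 1 := by
        simp only [hm]
        intro h
        rw [div_eq_one_iff_eq h2] at h
        exact hxz (by linear_combination h)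
      refine ⟨hm0, hm1, ?_⟩
      have h1m : 1 - m c ≠ 0 := sub_ne_zero.mpr (Ne.symm hm1)
      simp only [hminv, hm] at h1m ⊢
      field_simp at h1m ⊢
      linear_combination c * (mul_inv_cancel₀ hzx : (z - x) * (z - x)⁻¹ = 1)
    have hbwd : ∀ d : F, d ≠ 0 → d ≠ 1 → minv d ≠ x ∧ minv d ≠ z ∧ m (minv d) = d := by
      intro d hd0 hd1
      have h1d : 1 - d ≠ 0 := sub_ne_zero.mpr (Ne.symm hd1)
      have hx' : x - minv d = d * (z - x) / (1 - d) := by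
        simp only [hminv]; field_simp; ring
      have hz' : z - minv d = (z - x) / (1 - d) := by
        simp only [hminv]; field_simp; ring
      have hxne : x - minv d ≠ 0 := hx' ▸ div_ne_zero (mul_ne_zero hd0 hzx) h1d
      have hzne : z - minv d ≠ 0 := hz' ▸ div_ne_zero hzx h1d
      refine ⟨fun h => hxne (by rw [h, sub_self]), fun h => hzne (by rw [h, sub_self]), ?_⟩
      simp only [hm, hx', hz']
      field_simp
    have hval : ∀ c : F, c ≠ x → c ≠ z → χ0 (x - c) - χ0 (z - c) = χ0 (m c) := by
      intro c hcx hcz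
      have h1 : x - c ≠ 0 := sub_ne_zero.mpr (Ne.symm hcx)
      have h2 : z - c ≠ 0 := sub_ne_zero.mpr (Ne.symm hcz)
      have hm0 : m c ≠ 0 := div_ne_zero h1 h2
      have : x - c = m c * (z - c) := by
        simp only [hm]; field_simp
      rw [this, hχ0mul _ _ hm0 h2]
      ring
    have himg : {c : F | c ≠ x ∧ c ≠ z ∧ χ0 (x - c) - χ0 (z - c) = g}
        = minv '' {d : F | d ≠ 0 ∧ d ≠ 1 ∧ χ0 d = g} := by
      ext c
      constructor
      · rintro ⟨hcx, hcz, hg⟩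
        obtain ⟨h0, h1, hinv⟩ := hfwd c hcx hcz
        exact ⟨m c, ⟨h0, h1, by rw [← hval c hcx hcz]; exact hg⟩, hinv⟩
      · rintro ⟨d, ⟨hd0, hd1, hdg⟩, rfl⟩
        obtain ⟨h0, h1, hmd⟩ := hbwd d hd0 hd1
        exact ⟨h0, h1, by rw [hval _ h0 h1, hmd]; exact hdg⟩
    rw [himg]
    apply Set.ncard_image_of_injOn
    intro a ha b hb hab
    have ha' := (hbwd a ha.1 ha.2.1).2.2
    have hb' := (hbwd b hb.1 hb.2.1).2.2
    rw [← ha', ← hb', hab]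
  -- the projective line
  have hcard : Fintype.card (Option F) = p + 1 := by simp [hF]
  let e : Fin (p + 1) ≃ Option F := (Fintype.equivFinOfCardEq hcard).symm
  let φ : Option F → Option F → ZMod k := fun r y =>
    match r, y with
    | some a, some b => χ0 (a - b)
    | _, _ => 0
  have hφss : ∀ a b : F, φ (some a) (some b) = χ0 (a - b) := fun _ _ => rfl
  have hφn : ∀ y, φ none y = 0 := fun y => by cases y <;> rfl
  have hφsn : ∀ a : F, φ (some a) none = 0 := fun _ => rfl
  -- key counting lemma on Option F
  have key : ∀ r s : Option F, r ≠ s → ∀ g : ZMod k,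
      {y : Option F | y ≠ r ∧ y ≠ s ∧ φ r y - φ s y = g}.ncard = (p - 1) / k := by
    intro r s hrs g
    match r, s with
    | none, none => exact absurd rfl hrs
    | none, some x =>
      have hset : {y : Option F | y ≠ none ∧ y ≠ some x ∧ φ none y - φ (some x) y = g}
          = some '' {c : F | c ≠ x ∧ χ0 (x - c) = -g} := by
        ext y
        cases y with
        | none => simp
        | some c =>
          simp only [Set.mem_setOf_eq, Set.mem_image, ne_eq, Option.some.injEq, reduceCtorEq,
            not_false_eq_true, true_and]
          rw [hφn (some c), hφss x c]
          constructor
          · rintro ⟨hcx, hg⟩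
            exact ⟨c, ⟨hcx, by rw [← hg]; ring⟩, rfl⟩
          · rintro ⟨d, ⟨hd, hg⟩, rfl⟩
            exact ⟨hd, by rw [hg]; ring⟩
      rw [hset, Set.ncard_image_of_injective _ (Option.some_injective F), hA]
    | some x, none =>
      have hset : {y : Option F | y ≠ some x ∧ y ≠ none ∧ φ (some x) y - φ none y = g}
          = some '' {c : F | c ≠ x ∧ χ0 (x - c) = g} := by
        ext y
        cases y with
        | none => simp
        | some c =>
          simp only [Set.mem_setOf_eq, Set.mem_image, ne_eq, Option.some.injEq, reduceCtorEq,
            not_false_eq_true, true_and, and_true]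
          rw [hφss x c, hφn (some c), sub_zero]
          constructor
          · rintro ⟨hcx, hg⟩
            exact ⟨c, ⟨hcx, hg⟩, rfl⟩
          · rintro ⟨d, ⟨hd, hg⟩, rfl⟩
            exact ⟨hd, hg⟩
      rw [hset, Set.ncard_image_of_injective _ (Option.some_injective F)]
      exact hA x g
    | some x, some z =>
      have hxz : x ≠ z := fun h => hrs (by rw [h])
      set M := {c : F | c ≠ x ∧ c ≠ z ∧ χ0 (x - c) - χ0 (z - c) = g} with hM
      set N := {d : F | d ≠ 0 ∧ d ≠ 1 ∧ χ0 d = g} with hN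
      have hMN : M.ncard = N.ncard := hMob x z hxz g
      by_cases hg : g = 0
      · subst hg
        have hset : {y : Option F | y ≠ some x ∧ y ≠ some z ∧ φ (some x) y - φ (some z) y = 0}
            = insert none (some '' M) := by
          ext y
          cases y with
          | none =>
            simp only [Set.mem_setOf_eq, Set.mem_insert_iff, Set.mem_image, ne_eq,
              reduceCtorEq, not_false_eq_true, true_and]
            simp [hφsn]
          | some c =>
            simp only [Set.mem_setOf_eq, Set.mem_insert_iff, Set.mem_image, ne_eq,
              Option.some.injEq, reduceCtorEq, false_or, not_false_eq_true, true_and, hM,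
              Set.mem_setOf_eq]
            rw [hφss x c, hφss z c]
            constructor
            · rintro ⟨h1, h2, h3⟩
              exact ⟨c, ⟨h1, h2, h3⟩, rfl⟩
            · rintro ⟨d, ⟨h1, h2, h3⟩, rfl⟩
              exact ⟨h1, h2, h3⟩
        have hnone : (none : Option F) ∉ some '' M := by simp
        rw [hset, Set.ncard_insert_of_notMem hnone,
          Set.ncard_image_of_injective _ (Option.some_injective F), hMN]
        have hins : {d : F | d ≠ 0 ∧ χ0 d = 0} = insert 1 N := by
          ext d
          simp only [Set.mem_setOf_eq, Set.mem_insert_iff, hN]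
          constructor
          · rintro ⟨h0, hχ⟩
            by_cases h1 : d = 1
            · exact Or.inl h1
            · exact Or.inr ⟨h0, h1, hχ⟩
          · rintro (rfl | ⟨h0, _, hχ⟩)
            · exact ⟨one_ne_zero, hχ0one⟩
            · exact ⟨h0, hχ⟩
        have h1N : (1 : F) ∉ N := fun h => h.2.1 rfl
        have := hfibF 0
        rw [hins, Set.ncard_insert_of_notMem h1N] at this
        omega
      · have hset : {y : Option F | y ≠ some x ∧ y ≠ some z ∧ φ (some x) y - φ (some z) y = g}
            = some '' M := by
          ext y
          cases y with
          | none =>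
            simp only [Set.mem_setOf_eq, Set.mem_image, ne_eq, reduceCtorEq,
              not_false_eq_true, true_and]
            simp [Ne.symm hg, hφsn]
          | some c =>
            simp only [Set.mem_setOf_eq, Set.mem_image, ne_eq, Option.some.injEq,
              reduceCtorEq, not_false_eq_true, true_and, hM, Set.mem_setOf_eq]
            rw [hφss x c, hφss z c]
            constructor
            · rintro ⟨h1, h2, h3⟩
              exact ⟨c, ⟨h1, h2, h3⟩, rfl⟩
            · rintro ⟨d, ⟨h1, h2, h3⟩, rfl⟩
              exact ⟨h1, h2, h3⟩
        have hNfull : N = {d : F | d ≠ 0 ∧ χ0 d = g} := by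
          ext d
          simp only [hN, Set.mem_setOf_eq]
          refine ⟨fun h => ⟨h.1, h.2.2⟩, fun h => ⟨h.1, fun h1 => hg ?_, h.2⟩⟩
          rw [← h.2, h1, hχ0one]
        rw [hset, Set.ncard_image_of_injective _ (Option.some_injective F), hMN, hNfull, hfibF]
  -- assemble the matrix
  refine ⟨fun i c => if e c = e i then none else some (φ (e i) (e c)), ?_, ?_⟩
  · intro i
    have hset : {c : Fin (p + 1) | (if e c = e i then none else some (φ (e i) (e c))) ≠ none}
        = ({i} : Set (Fin (p + 1)))ᶜ := by
      ext c
      simp only [Set.mem_setOf_eq, Set.mem_compl_iff, Set.mem_singleton_iff]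
      constructor
      · intro h hc
        rw [hc] at h
        simp at h
      · intro h
        rw [if_neg (fun hc => h (e.injective hc))]
        simp
    rw [hset]
    have h1 : ({i} : Set (Fin (p + 1))).ncard + ({i} : Set (Fin (p + 1)))ᶜ.ncard
        = Nat.card (Fin (p + 1)) := Set.ncard_add_ncard_compl _
    rw [Set.ncard_singleton, Nat.card_eq_fintype_card, Fintype.card_fin] at h1
    omega
  · intro i j hij g
    have hrs : e i ≠ e j := fun h => hij (e.injective h)
    have hset : {c : Fin (p + 1) | ∃ a b : ZMod k,
        (if e c = e i then none else some (φ (e i) (e c))) = some a ∧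
        (if e c = e j then none else some (φ (e j) (e c))) = some b ∧ a - b = g}
        = e ⁻¹' {y : Option F | y ≠ e i ∧ y ≠ e j ∧ φ (e i) y - φ (e j) y = g} := by
      ext c
      simp only [Set.mem_setOf_eq, Set.mem_preimage]
      constructor
      · rintro ⟨a, b, ha, hb, hab⟩
        by_cases h1 : e c = e i
        · rw [if_pos h1] at ha; exact absurd ha (by simp)
        by_cases h2 : e c = e j
        · rw [if_pos h2] at hb; exact absurd hb (by simp)
        rw [if_neg h1] at ha
        rw [if_neg h2] at hb
        refine ⟨h1, h2, ?_⟩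
        rw [Option.some_injective _ ha, Option.some_injective _ hb]
        exact hab
      · rintro ⟨h1, h2, h3⟩
        exact ⟨_, _, if_neg h1, if_neg h2, h3⟩
    rw [hset, Set.ncard_preimage_of_injective_subset_range e.injective
      (by rw [Equiv.range_eq_univ]; exact Set.subset_univ _)]
    exact key (e i) (e j) hrs g

theorem stmt_2 (q t p k : ℕ) (hq : q.Prime) (ht : 1 ≤ t) (hp : p = q ^ t)
    (hk : 1 ≤ k) (hdvd : k ∣ p - 1) :
    ∃ W : Fin (p + 1) → Fin (p + 1) → Option (ZMod k), IsBGW (p + 1) p (p - 1) k W := by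
  haveI := Fact.mk hq
  haveI : Fintype (GaloisField q t) := Fintype.ofFinite _
  apply bgw_of_field p k (GaloisField q t) _ hk hdvd
  rw [← Nat.card_eq_fintype_card, GaloisField.card q t (by omega), hp]
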